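/- Let P = p_1 ... p_n be a cutting of a pizza into an odd number n of slices, and suppose Bob has a strategy with gain g ≥ |P|/2, i.e., a strategy guaranteeing him a set Q of (n-1)/2 slices of total size at least g. Let x = min_i |p_i| > 0 and let P' be the cutting with slice sizes |p'_i| = |p_i| - x. Then using the same strategy on P', Bob's guaranteed gain is at least g - x(n-1)/2, and this quantity is strictly greater than g·|P'|/|P|, where |P'| = |P| - xn. -/

import Mathlib

/-- Adjacency of slices on the circular pizza with `n` slices. -/
def adj (n : ℕ) (i j : Fin n) : Prop :=
  (i.1 + 1) % n = j.1 ∨ (j.1 + 1) % n = i.1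

instance (n : ℕ) (i j : Fin n) : Decidable (adj n i j) := by
  unfold adj; infer_instance

/-- `h` lists the slices taken so far, in the order they were taken.
It is a valid (partial) play of the Polite Pizza Protocol if no slice is taken
twice and every slice except the first is adjacent to a previously taken one. -/
def ValidHist (n : ℕ) (h : List (Fin n)) : Prop :=
  h.Nodup ∧ ∀ (k : ℕ) (hk : k < h.length), 0 < k →
    ∃ (j : ℕ) (hj : j < k), adj n (h.get ⟨k, hk⟩) (h.get ⟨j, hj.trans hk⟩)

/-- `m` is a legal next slice after history `h`. -/
def ValidMove (n : ℕ) (h : List (Fin n)) (m : Fin n) : Prop :=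
  m ∉ h ∧ (h = [] ∨ ∃ x ∈ h, adj n m x)

/-- Total size of the slices taken at (0-based) turns satisfying `f`. -/
def gainOn (n : ℕ) (P : Fin n → ℝ) (f : ℕ → Bool) (l : List (Fin n)) : ℝ :=
  (((l.zipIdx.map Prod.swap).filter (fun p => f p.1)).map (fun p => P p.2)).sum

/-- Alice moves at even turns (0-based), Bob at odd turns. -/
def isAlice (k : ℕ) : Bool := k % 2 == 0
def isBob (k : ℕ) : Bool := k % 2 == 1

def aliceGain (n : ℕ) (P : Fin n → ℝ) (l : List (Fin n)) : ℝ := gainOn n P isAlice l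
def bobGain (n : ℕ) (P : Fin n → ℝ) (l : List (Fin n)) : ℝ := gainOn n P isBob l

/-- The play `l` is consistent with the strategy `s` used at the turns satisfying `f`. -/
def Consistent (n : ℕ) (f : ℕ → Bool) (s : List (Fin n) → Fin n) (l : List (Fin n)) : Prop :=
  ∀ (k : ℕ) (hk : k < l.length), f k → l.get ⟨k, hk⟩ = s (l.take k)

/-- The strategy `s`, used at turns satisfying `f`, always produces legal moves. -/
def Legal (n : ℕ) (f : ℕ → Bool) (s : List (Fin n) → Fin n) : Prop :=
  ∀ h, ValidHist n h → h.length < n → f h.length → ValidMove n h (s h)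

/-- Number of jumps made at turns satisfying `f` during the play `l`:
turn `k ≥ 1` is a jump if the slice taken is not adjacent to the one taken at turn `k-1`. -/
def jumpCount (n : ℕ) (f : ℕ → Bool) (l : List (Fin n)) : ℕ :=
  ((((l.zip l.tail).zipIdx.map Prod.swap)).filter
    (fun p => f (p.1 + 1) && !(decide (adj n p.2.2 p.2.1)))).length

/-- Alice has a strategy making at most `j` jumps and guaranteeing her
slices of total size at least `g`. -/
def AliceJGain (n : ℕ) (P : Fin n → ℝ) (j : ℕ) (g : ℝ) : Prop :=
  ∃ s : List (Fin n) → Fin n, Legal n isAlice s ∧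
    ∀ l : List (Fin n), ValidHist n l → l.length = n → Consistent n isAlice s l →
      g ≤ aliceGain n P l ∧ jumpCount n isAlice l ≤ j

/-- Alice has a strategy guaranteeing her slices of total size at least `g`. -/
def AliceGain' (n : ℕ) (P : Fin n → ℝ) (g : ℝ) : Prop :=
  ∃ s : List (Fin n) → Fin n, Legal n isAlice s ∧
    ∀ l : List (Fin n), ValidHist n l → l.length = n → Consistent n isAlice s l →
      g ≤ aliceGain n P l

/-- Bob (moving second) has a strategy guaranteeing him slices of total size at least `g`. -/
def BobGain' (n : ℕ) (P : Fin n → ℝ) (g : ℝ) : Prop :=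
  ∃ s : List (Fin n) → Fin n, Legal n isBob s ∧
    ∀ l : List (Fin n), ValidHist n l → l.length = n → Consistent n isBob s l →
      g ≤ bobGain n P l

lemma list_sum_map_sub {α : Type*} (L : List α) (f : α → ℝ) (x : ℝ) :
    (L.map (fun a => f a - x)).sum = (L.map f).sum - L.length * x := by
  induction L with
  | nil => simp
  | cons a t ih => simp [ih]; ring

lemma range_filter_isBob (n : ℕ) : ((List.range n).filter isBob).length = n / 2 := by
  induction n with
  | zero => simp
  | succ m ih =>
    rw [List.range_succ, List.filter_append, List.length_append, ih]
    by_cases h : m % 2 = 1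
    · have hb : isBob m = true := by simp [isBob, h]
      simp [hb]; omega
    · have hb : isBob m = false := by simp [isBob, h]
      simp [hb]; omega

lemma filter_enum_length {α : Type*} (l : List α) (f : ℕ → Bool) :
    ((l.zipIdx.map Prod.swap).filter (fun p => f p.1)).length = ((List.range l.length).filter f).length := by
  have hk : (l.zipIdx.map Prod.swap).map Prod.fst = List.range l.length := by
    rw [List.map_map]; exact (List.zipIdx_map_snd 0 l).trans List.range_eq_range'.symm
  rw [show (fun (p : ℕ × α) => f p.1) = f ∘ Prod.fst from rfl,
    ← List.length_map (f := Prod.fst), ← List.filter_map, hk]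

/-- subtracting the minimum slice size `x > 0` from every slice,
Bob keeps (with the same strategy) gain at least `g - x(n-1)/2`, which is strictly
more than `g·|P\'|/|P|`. -/
theorem bob_gain_after_subtracting_min (n : ℕ) (hn : Odd n)
    (P : Fin n → ℝ) (hP : ∀ i, 0 < P i)
    (g : ℝ) (hg : BobGain' n P g) (hghalf : (∑ i, P i) / 2 ≤ g)
    (x : ℝ) (hxpos : 0 < x) (hxle : ∀ i, x ≤ P i) (hxmin : ∃ i, P i = x) :
    BobGain' n (fun i => P i - x) (g - x * ((n : ℝ) - 1) / 2) ∧
    g * ((∑ i, P i) - x * n) / (∑ i, P i) < g - x * ((n : ℝ) - 1) / 2 := by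
  have hnpos : 0 < n := hn.pos
  haveI : Nonempty (Fin n) := ⟨⟨0, hnpos⟩⟩
  have hS : 0 < ∑ i, P i := Finset.sum_pos (fun i _ => hP i) Finset.univ_nonempty
  have hncast : ((n / 2 : ℕ) : ℝ) = ((n : ℝ) - 1) / 2 := by
    obtain ⟨m, hm⟩ := hn
    have h2 : n / 2 = m := by omega
    rw [h2, hm]; push_cast; ring
  constructor
  · obtain ⟨s, hs, hgain⟩ := hg
    refine ⟨s, hs, ?_⟩
    intro l hv hl hc
    have h1 := hgain l hv hl hc
    have key : bobGain n (fun i => P i - x) l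
        = bobGain n P l - ((n / 2 : ℕ) : ℝ) * x := by
      unfold bobGain gainOn
      have := list_sum_map_sub ((l.zipIdx.map Prod.swap).filter (fun p => isBob p.1))
        (fun p => P p.2) x
      simp only [this, filter_enum_length, range_filter_isBob, hl]
    rw [key, hncast]
    have : ((n : ℝ) - 1) / 2 * x = x * ((n : ℝ) - 1) / 2 := by ring
    rw [this]
    linarith
  · rw [div_lt_iff₀ hS]
    have hn1 : (1 : ℝ) ≤ (n : ℝ) := by exact_mod_cast hnpos
    nlinarith [mul_pos hxpos hS, mul_le_mul_of_nonneg_right hghalf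
      (by positivity : (0:ℝ) ≤ x * n)]
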